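/- arXiv:1007.3803 — 2 statements merged into one kernel-verified Lean document; each statement's English description precedes it below -/
import Mathlib

section
/- Let π : [0,1] → V be a piecewise linear path with π(0) = 0 and α a simple root, with Q and P as defined for the root operators. For every n ∈ ℕ with n ≥ 1, the n-fold iterate (e_α)^n π is defined if and only if n ≤ −Q, and (f_α)^n π is defined if and only if n ≤ P. Moreover, if π(1) ∈ P^∨ then P + Q = α(π(1)). -/
noncomputable section

open Module Set Filter

/-- Data of a finite, reduced, irreducible, crystallographic root system `Φ` in the dual of a
real vector space `V`, together with coroots, reflections, simple roots and positive roots. -/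
structure RootSystemSetup (V : Type) [AddCommGroup V] [Module ℝ V] where
  /-- the set of roots, living in the dual space -/
  Φ : Set (Module.Dual ℝ V)
  Φ_finite : Φ.Finite
  Φ_spans : Submodule.span ℝ Φ = ⊤
  zero_not_mem : (0 : Module.Dual ℝ V) ∉ Φ
  /-- the coroot `α^∨` of a root `α` -/
  coroot : Module.Dual ℝ V → V
  pairing_self : ∀ α ∈ Φ, α (coroot α) = 2
  crystallographic : ∀ α ∈ Φ, ∀ β ∈ Φ, ∃ n : ℤ, β (coroot α) = (n : ℝ)
  reduced : ∀ α ∈ Φ, ∀ c : ℝ, c • α ∈ Φ → c = 1 ∨ c = -1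
  neg_mem : ∀ α ∈ Φ, -α ∈ Φ
  coroot_neg : ∀ α ∈ Φ, coroot (-α) = -coroot α
  /-- the reflection `r_α` associated to a root `α` -/
  refl : Module.Dual ℝ V → (V ≃ₗ[ℝ] V)
  refl_apply : ∀ α ∈ Φ, ∀ x : V, refl α x = x - α x • coroot α
  refl_stable : ∀ α ∈ Φ, ∀ β ∈ Φ, β ∘ₗ (refl α).toLinearMap ∈ Φ
  /-- index set of the simple roots -/
  I : Type
  I_fintype : Fintype I
  /-- the simple roots `α_i` -/
  simpleRoot : I → Module.Dual ℝ V
  simple_mem : ∀ i, simpleRoot i ∈ Φ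
  /-- the positive roots `Φ⁺` -/
  pos : Set (Module.Dual ℝ V)
  pos_subset : pos ⊆ Φ
  pos_total : ∀ α ∈ Φ, α ∈ pos ∨ -α ∈ pos
  pos_not_neg : ∀ α ∈ pos, -α ∉ pos
  simple_pos : ∀ i, simpleRoot i ∈ pos
  pos_sum_simple : ∀ α ∈ pos, ∃ c : I → ℝ, (∀ i, 0 ≤ c i) ∧ α = ∑ᶠ i, c i • simpleRoot i
  irreducible : ¬ ∃ Φ₁ Φ₂ : Set (Module.Dual ℝ V), Φ₁.Nonempty ∧ Φ₂.Nonempty ∧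
      Φ₁ ∪ Φ₂ = Φ ∧ ∀ α ∈ Φ₁, ∀ β ∈ Φ₂, α (coroot β) = 0

namespace RootSystemSetup

variable {V : Type} [AddCommGroup V] [Module ℝ V] (S : RootSystemSetup V)

/-- The finite Weyl group `W^v`, generated by the reflections in the roots. -/
def W : Subgroup (V ≃ₗ[ℝ] V) := Subgroup.closure (S.refl '' S.Φ)

/-- The fundamental closed Weyl chamber `C^v`. -/
def Cv : Set V := {x | ∀ i, 0 ≤ S.simpleRoot i x}

/-- The coweight lattice `P^∨ = {x | α(x) ∈ ℤ for all α ∈ Φ}`. -/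
def Pvee : Set V := {x | ∀ α ∈ S.Φ, ∃ n : ℤ, α x = (n : ℝ)}

/-- `P^{∨+} = P^∨ ∩ C^v`, the dominant coweights. -/
def PveePlus : Set V := S.Pvee ∩ S.Cv

/-- The Coxeter length of `w` in `W^v`: the least number of simple reflections whose
product is `w`. -/
def len (w : V ≃ₗ[ℝ] V) : ℕ :=
  sInf {n | ∃ l : List (V ≃ₗ[ℝ] V), l.length = n ∧
    (∀ s ∈ l, ∃ i, s = S.refl (S.simpleRoot i)) ∧ l.prod = w}

/-- One step in the Bruhat-Chevalley order: multiply on the right by a root reflection,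
strictly increasing the length. -/
def BruhatStep (u v : V ≃ₗ[ℝ] V) : Prop :=
  (∃ β ∈ S.Φ, v = u * S.refl β) ∧ S.len u < S.len v

/-- The Bruhat-Chevalley order on `W^v`. -/
def Bruhat : (V ≃ₗ[ℝ] V) → (V ≃ₗ[ℝ] V) → Prop := Relation.ReflTransGen S.BruhatStep

/-- `w` is the minimal-length element of `W^v` mapping `lam` to `v` (i.e. the minimal-length
representative of the coset of `W^v/W^v_lam` sending `lam` to `v`). -/
def IsMinRep (lam v : V) (w : V ≃ₗ[ℝ] V) : Prop :=
  w ∈ S.W ∧ w lam = v ∧ ∀ u ∈ S.W, u lam = v → S.len w ≤ S.len u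

end RootSystemSetup

section RootOperators

variable {V : Type} [AddCommGroup V] [Module ℝ V]

/-- `π : ℝ → V` is a piecewise linear path on `[0,1]`: there is a subdivision
`0 = t_0 < t_1 < ⋯ < t_n = 1` such that `π` is affine on each `[t_{i-1}, t_i]`. -/
def PiecewiseLinear (π : ℝ → V) : Prop :=
  ∃ (n : ℕ) (t : Fin (n + 1) → ℝ), t 0 = 0 ∧ t (Fin.last n) = 1 ∧ StrictMono t ∧
    ∀ i : Fin n, ∃ v : V, ∀ s ∈ Set.Icc (t i.castSucc) (t i.succ),
      π s = π (t i.castSucc) + (s - t i.castSucc) • v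

/-- `Q = min((α∘π)([0,1]) ∩ ℤ)`, the minimal integer value of `α∘π` on `[0,1]`. -/
def Qval (α : Module.Dual ℝ V) (π : ℝ → V) : ℝ :=
  sInf {r : ℝ | (∃ t ∈ Set.Icc (0 : ℝ) 1, α (π t) = r) ∧ ∃ n : ℤ, r = (n : ℝ)}

/-- `P`, the integer part of `α(π(1)) − Q`. -/
def Pval (α : Module.Dual ℝ V) (π : ℝ → V) : ℤ := ⌊α (π 1) - Qval α π⌋

/-- `q = min{t ∈ [0,1] : α(π(t)) = Q}`. -/
def qTime (α : Module.Dual ℝ V) (π : ℝ → V) : ℝ :=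
  sInf {t | t ∈ Set.Icc (0 : ℝ) 1 ∧ α (π t) = Qval α π}

/-- `y = max{t ∈ [0,q] : α(π(t)) = Q + 1}`. -/
def yTime (α : Module.Dual ℝ V) (π : ℝ → V) : ℝ :=
  sSup {t | t ∈ Set.Icc (0 : ℝ) (qTime α π) ∧ α (π t) = Qval α π + 1}

/-- The root operator `e_α` (with coroot `cα`): defined iff `Q ≤ −1`, in which case it is
the concatenation of `π|[0,y]`, the mirror image of `π|[y,q]` in the hyperplane
`{α = Q+1}` (by `s_{α,Q+1} : v ↦ v − (α(v) − (Q+1))·α^∨`), and the corresponding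
translate of `π|[q,1]`. -/
def eOp (α : Module.Dual ℝ V) (cα : V) (π : ℝ → V) : Option (ℝ → V) :=
  if Qval α π ≤ -1 then
    some (fun s =>
      if s ≤ yTime α π then π s
      else if s ≤ qTime α π then π s - (α (π s) - (Qval α π + 1)) • cα
      else π s - π (qTime α π) +
        (π (qTime α π) - (α (π (qTime α π)) - (Qval α π + 1)) • cα))
  else none

/-- `p = max{t ∈ [0,1] : α(π(t)) = Q}`. -/
def pTime (α : Module.Dual ℝ V) (π : ℝ → V) : ℝ :=
  sSup {t | t ∈ Set.Icc (0 : ℝ) 1 ∧ α (π t) = Qval α π}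

/-- `x = min{t ∈ [p,1] : α(π(t)) = Q + 1}`. -/
def xTime (α : Module.Dual ℝ V) (π : ℝ → V) : ℝ :=
  sInf {t | t ∈ Set.Icc (pTime α π) 1 ∧ α (π t) = Qval α π + 1}

/-- The root operator `f_α` (with coroot `cα`): defined iff `P ≥ 1`, in which case it is
the concatenation of `π|[0,p]`, the mirror image of `π|[p,x]` in the hyperplane
`{α = Q}` (by `s_{α,Q} : v ↦ v − (α(v) − Q)·α^∨`), and the corresponding translate of
`π|[x,1]`. -/
def fOp (α : Module.Dual ℝ V) (cα : V) (π : ℝ → V) : Option (ℝ → V) :=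
  if 1 ≤ Pval α π then
    some (fun s =>
      if s ≤ pTime α π then π s
      else if s ≤ xTime α π then π s - (α (π s) - Qval α π) • cα
      else π s - π (xTime α π) + (π (xTime α π) - (α (π (xTime α π)) - Qval α π) • cα))
  else none

end RootOperators

section Iterates

variable {V : Type} [AddCommGroup V] [Module ℝ V]

/-- The `n`-fold iterate `(e_α)^n π` (as a partial operation). -/
def eIter (α : Module.Dual ℝ V) (cα : V) : ℕ → (ℝ → V) → Option (ℝ → V)
  | 0, π => some π
  | n + 1, π => (eIter α cα n π).bind (eOp α cα)

/-- The `n`-fold iterate `(f_α)^n π` (as a partial operation). -/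
def fIter (α : Module.Dual ℝ V) (cα : V) : ℕ → (ℝ → V) → Option (ℝ → V)
  | 0, π => some π
  | n + 1, π => (fIter α cα n π).bind (fOp α cα)

end Iterates
section AuxProofs

variable {V : Type} [AddCommGroup V] [Module ℝ V]

/-- The set of integer values attained by `α ∘ τ` on `[0,1]`. -/
def Aset (α : Module.Dual ℝ V) (τ : ℝ → V) : Set ℝ :=
  {r : ℝ | (∃ t ∈ Set.Icc (0 : ℝ) 1, α (τ t) = r) ∧ ∃ n : ℤ, r = (n : ℝ)}

lemma Qval_eq_sInf_Aset (α : Module.Dual ℝ V) (τ : ℝ → V) :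
    Qval α τ = sInf (Aset α τ) := rfl

/-- The invariant preserved by the root operators. -/
def GoodPath (α : Module.Dual ℝ V) (τ : ℝ → V) : Prop :=
  ContinuousOn (fun t => α (τ t)) (Set.Icc 0 1) ∧ α (τ 0) = 0

lemma goodPath_isLeast {α : Module.Dual ℝ V} {τ : ℝ → V} (h : GoodPath α τ) :
    IsLeast (Aset α τ) (Qval α τ) ∧ ∃ m : ℤ, Qval α τ = (m : ℝ) := by
  have h0mem : (0 : ℝ) ∈ Aset α τ := ⟨⟨0, ⟨le_refl 0, zero_le_one⟩, h.2⟩, 0, by norm_num⟩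
  have himg : BddBelow ((fun t => α (τ t)) '' Set.Icc 0 1) :=
    (isCompact_Icc.image_of_continuousOn h.1).bddBelow
  obtain ⟨b, hb⟩ := himg
  have hbdd : ∃ b : ℤ, ∀ z : ℤ, ((z : ℝ) ∈ Aset α τ) → b ≤ z := by
    refine ⟨⌈b⌉, fun z hz => ?_⟩
    have : b ≤ (z : ℝ) := by
      obtain ⟨⟨t, ht, hzt⟩, _⟩ := hz
      exact hb ⟨t, ht, hzt⟩
    exact_mod_cast Int.ceil_le.2 this
  have hinh : ∃ z : ℤ, ((z : ℝ) ∈ Aset α τ) := ⟨0, by exact_mod_cast h0mem⟩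
  obtain ⟨m, hm, hlbm⟩ := Int.exists_least_of_bdd hbdd hinh
  have hleast : IsLeast (Aset α τ) (m : ℝ) := by
    refine ⟨hm, ?_⟩
    rintro r ⟨hr1, n, rfl⟩
    exact_mod_cast hlbm n ⟨hr1, n, rfl⟩
  have hQ : Qval α τ = (m : ℝ) := by
    rw [Qval_eq_sInf_Aset]; exact hleast.csInf_eq
  exact ⟨hQ ▸ hleast, m, hQ⟩

lemma qval_nonpos {α : Module.Dual ℝ V} {τ : ℝ → V} (h : GoodPath α τ) :
    Qval α τ ≤ 0 :=
  (goodPath_isLeast h).1.2 ⟨⟨0, ⟨le_refl 0, zero_le_one⟩, h.2⟩, 0, by norm_num⟩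

lemma Tset_facts {α : Module.Dual ℝ V} {τ : ℝ → V} (h : GoodPath α τ) :
    IsCompact {t | t ∈ Set.Icc (0 : ℝ) 1 ∧ α (τ t) = Qval α τ} ∧
    Set.Nonempty {t | t ∈ Set.Icc (0 : ℝ) 1 ∧ α (τ t) = Qval α τ} := by
  have hQA := (goodPath_isLeast h).1.1
  obtain ⟨⟨t0, ht0, hgt0⟩, _⟩ := hQA
  have hclosed : IsClosed {t | t ∈ Set.Icc (0 : ℝ) 1 ∧ α (τ t) = Qval α τ} := by
    have : {t | t ∈ Set.Icc (0 : ℝ) 1 ∧ α (τ t) = Qval α τ} =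
        Set.Icc (0 : ℝ) 1 ∩ (fun t => α (τ t)) ⁻¹' {Qval α τ} := by
      ext u; simp [Set.mem_setOf_eq]
    rw [this]
    exact h.1.preimage_isClosed_of_isClosed isClosed_Icc isClosed_singleton
  exact ⟨isCompact_Icc.of_isClosed_subset hclosed (fun u hu => hu.1), ⟨t0, ht0, hgt0⟩⟩

lemma qTime_pTime_facts {α : Module.Dual ℝ V} {τ : ℝ → V} (h : GoodPath α τ) :
    qTime α τ ∈ Set.Icc (0 : ℝ) 1 ∧ α (τ (qTime α τ)) = Qval α τ ∧
    pTime α τ ∈ Set.Icc (0 : ℝ) 1 ∧ α (τ (pTime α τ)) = Qval α τ := by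
  obtain ⟨hcomp, hne⟩ := Tset_facts h
  have hq := hcomp.sInf_mem hne
  have hp := hcomp.sSup_mem hne
  exact ⟨hq.1, hq.2, hp.1, hp.2⟩

lemma gt_of_lt_qTime {α : Module.Dual ℝ V} {τ : ℝ → V} (h : GoodPath α τ)
    {t : ℝ} (ht0 : 0 ≤ t) (htq : t < qTime α τ) : Qval α τ < α (τ t) := by
  obtain ⟨hcomp, hne⟩ := Tset_facts h
  obtain ⟨hqI, hgq, _, _⟩ := qTime_pTime_facts h
  by_contra hle
  push_neg at hle
  have ht1 : t ≤ 1 := le_trans htq.le hqI.2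
  have hmem : Qval α τ ∈ Set.Icc (α (τ t)) (α (τ 0)) :=
    ⟨hle, by rw [h.2]; exact qval_nonpos h⟩
  obtain ⟨t', ht', hgt'⟩ := intermediate_value_Icc' ht0
    (h.1.mono (Set.Icc_subset_Icc le_rfl ht1)) hmem
  have ht'T : t' ∈ {u | u ∈ Set.Icc (0 : ℝ) 1 ∧ α (τ u) = Qval α τ} :=
    ⟨⟨ht'.1, le_trans ht'.2 ht1⟩, hgt'⟩
  have : qTime α τ ≤ t' := csInf_le hcomp.bddBelow ht'T
  linarith [ht'.2]

lemma gt_of_gt_pTime {α : Module.Dual ℝ V} {τ : ℝ → V} (h : GoodPath α τ)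
    (hg1 : Qval α τ < α (τ 1)) {t : ℝ} (ht1 : t ≤ 1) (hpt : pTime α τ < t) :
    Qval α τ < α (τ t) := by
  obtain ⟨hcomp, hne⟩ := Tset_facts h
  obtain ⟨_, _, hpI, hgp⟩ := qTime_pTime_facts h
  by_contra hle
  push_neg at hle
  have ht0 : 0 ≤ t := le_trans hpI.1 hpt.le
  have hmem : Qval α τ ∈ Set.Icc (α (τ t)) (α (τ 1)) := ⟨hle, hg1.le⟩
  obtain ⟨t', ht', hgt'⟩ := intermediate_value_Icc ht1
    (h.1.mono (Set.Icc_subset_Icc ht0 le_rfl)) hmem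
  have ht'T : t' ∈ {u | u ∈ Set.Icc (0 : ℝ) 1 ∧ α (τ u) = Qval α τ} :=
    ⟨⟨le_trans ht0 ht'.1, ht'.2⟩, hgt'⟩
  have : t' ≤ pTime α τ := le_csSup hcomp.bddAbove ht'T
  linarith [ht'.1]

end AuxProofs
section EOpSpec

variable {V : Type} [AddCommGroup V] [Module ℝ V]

lemma eOp_spec {α : Module.Dual ℝ V} {cα : V} (h2 : α cα = 2) {τ : ℝ → V}
    (h : GoodPath α τ) (hQ : Qval α τ ≤ -1) :
    ∃ τ' : ℝ → V, eOp α cα τ = some τ' ∧ GoodPath α τ' ∧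
      Qval α τ' = Qval α τ + 1 := by
  obtain ⟨hleast, m, hQm⟩ := goodPath_isLeast h
  obtain ⟨hqI, hgq, _, _⟩ := qTime_pTime_facts h
  have hq0 : (0 : ℝ) ≤ qTime α τ := hqI.1
  have hq1 : qTime α τ ≤ 1 := hqI.2
  have hcq : ContinuousOn (fun t => α (τ t)) (Set.Icc 0 (qTime α τ)) :=
    h.1.mono (Set.Icc_subset_Icc le_rfl hq1)
  -- the set defining yTime
  set Y : Set ℝ := {t | t ∈ Set.Icc 0 (qTime α τ) ∧ α (τ t) = Qval α τ + 1} with hYdef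
  have hYne : Y.Nonempty := by
    have hmem : Qval α τ + 1 ∈ Set.Icc (α (τ (qTime α τ))) (α (τ 0)) := by
      rw [hgq, h.2]; exact ⟨by linarith, by linarith⟩
    obtain ⟨t0, ht0, hgt0⟩ := intermediate_value_Icc' hq0 hcq hmem
    exact ⟨t0, ht0, hgt0⟩
  have hYclosed : IsClosed Y := by
    have : Y = Set.Icc 0 (qTime α τ) ∩ (fun t => α (τ t)) ⁻¹' {Qval α τ + 1} := by
      ext u; simp [hYdef, Set.mem_setOf_eq]
    rw [this]
    exact hcq.preimage_isClosed_of_isClosed isClosed_Icc isClosed_singleton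
  have hYcomp : IsCompact Y := isCompact_Icc.of_isClosed_subset hYclosed (fun u hu => hu.1)
  have hyY : yTime α τ ∈ Y := hYcomp.sSup_mem hYne
  have hy0 : (0 : ℝ) ≤ yTime α τ := hyY.1.1
  have hyq : yTime α τ ≤ qTime α τ := hyY.1.2
  have hgy : α (τ (yTime α τ)) = Qval α τ + 1 := hyY.2
  have hylt : yTime α τ < qTime α τ := by
    rcases lt_or_eq_of_le hyq with h' | h'
    · exact h'
    · rw [h', hgq] at hgy; linarith
  -- upper bound on the middle segment
  have hupper : ∀ t, yTime α τ ≤ t → t ≤ qTime α τ → α (τ t) ≤ Qval α τ + 1 := by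
    intro t hyt htq
    by_contra hgt
    push_neg at hgt
    have htq' : t < qTime α τ := by
      rcases lt_or_eq_of_le htq with h' | h'
      · exact h'
      · rw [h', hgq] at hgt; linarith
    have hmem : Qval α τ + 1 ∈ Set.Icc (α (τ (qTime α τ))) (α (τ t)) :=
      ⟨by rw [hgq]; linarith, hgt.le⟩
    obtain ⟨t', ht', hgt'⟩ := intermediate_value_Icc' htq'.le
      (hcq.mono (Set.Icc_subset_Icc (le_trans hy0 hyt) le_rfl)) hmem
    have ht'Y : t' ∈ Y := ⟨⟨le_trans hy0 (le_trans hyt ht'.1), ht'.2⟩, hgt'⟩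
    have hle' : t' ≤ yTime α τ := le_csSup hYcomp.bddAbove ht'Y
    have : t = yTime α τ := le_antisymm (le_trans ht'.1 hle') hyt
    rw [this, hgy] at hgt; linarith
  -- the new path
  set τ' : ℝ → V := fun s =>
      if s ≤ yTime α τ then τ s
      else if s ≤ qTime α τ then τ s - (α (τ s) - (Qval α τ + 1)) • cα
      else τ s - τ (qTime α τ) +
        (τ (qTime α τ) - (α (τ (qTime α τ)) - (Qval α τ + 1)) • cα) with hτ'
  have heop : eOp α cα τ = some τ' := by rw [eOp, if_pos hQ]
  -- values of α on the new path
  have gA : ∀ t : ℝ, t ≤ yTime α τ → α (τ' t) = α (τ t) := by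
    intro t ht; rw [hτ']; simp only [if_pos ht]
  have gB : ∀ t : ℝ, ¬(t ≤ yTime α τ) → t ≤ qTime α τ →
      α (τ' t) = 2 * (Qval α τ + 1) - α (τ t) := by
    intro t ht htq
    rw [hτ']
    simp only [if_neg ht, if_pos htq, map_sub, map_smul, smul_eq_mul, h2]
    ring
  have gC : ∀ t : ℝ, ¬(t ≤ yTime α τ) → ¬(t ≤ qTime α τ) →
      α (τ' t) = α (τ t) + 2 := by
    intro t ht htq
    rw [hτ']
    simp only [if_neg ht, if_neg htq, map_add, map_sub, map_smul, smul_eq_mul, h2, hgq]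
    ring
  -- GoodPath τ'
  have hgood' : GoodPath α τ' := by
    constructor
    · have hclamp : Continuous (fun t : ℝ => max (yTime α τ) (min t (qTime α τ))) :=
        continuous_const.max (continuous_id.min continuous_const)
      have hmaps : Set.MapsTo (fun t : ℝ => max (yTime α τ) (min t (qTime α τ)))
          (Set.Icc 0 1) (Set.Icc 0 1) := by
        intro t ht
        constructor
        · exact le_trans hy0 (le_max_left _ _)
        · exact max_le (le_trans hyq hq1) (le_trans (min_le_right _ _) hq1)
      have hcont2 : ContinuousOn
          (fun t : ℝ => α (τ (max (yTime α τ) (min t (qTime α τ))))) (Set.Icc 0 1) :=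
        h.1.comp hclamp.continuousOn hmaps
      have hmodel : ContinuousOn (fun t : ℝ => α (τ t) +
          2 * ((Qval α τ + 1) - α (τ (max (yTime α τ) (min t (qTime α τ))))))
          (Set.Icc 0 1) :=
        h.1.add (continuousOn_const.mul (continuousOn_const.sub hcont2))
      refine hmodel.congr ?_
      intro t ht
      show α (τ' t) = α (τ t) +
          2 * ((Qval α τ + 1) - α (τ (max (yTime α τ) (min t (qTime α τ)))))
      rcases le_or_gt t (yTime α τ) with h1 | h1
      · have hcl : max (yTime α τ) (min t (qTime α τ)) = yTime α τ := by
          rw [min_eq_left (le_trans h1 hyq), max_eq_left h1]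
        rw [gA t h1, hcl, hgy]; ring
      · rcases le_or_gt t (qTime α τ) with h2 | h2
        · have hcl : max (yTime α τ) (min t (qTime α τ)) = t := by
            rw [min_eq_left h2, max_eq_right h1.le]
          rw [gB t (not_le.2 h1) h2, hcl]; ring
        · have hcl : max (yTime α τ) (min t (qTime α τ)) = qTime α τ := by
            rw [min_eq_right h2.le, max_eq_right hyq]
          rw [gC t (not_le.2 h1) (not_le.2 h2), hcl, hgq]; ring
    · rw [gA 0 hy0, h.2]
  refine ⟨τ', heop, hgood', ?_⟩
  -- computation of the new Qval
  have hmem : Qval α τ + 1 ∈ Aset α τ' := by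
    refine ⟨⟨yTime α τ, ⟨hy0, le_trans hyq hq1⟩, ?_⟩, m + 1, ?_⟩
    · rw [gA _ le_rfl, hgy]
    · rw [hQm]; push_cast; ring
  have hlb : ∀ r ∈ Aset α τ', Qval α τ + 1 ≤ r := by
    rintro r ⟨⟨t, ht, hrt⟩, n, rfl⟩
    rcases le_or_gt t (yTime α τ) with h1 | h1
    · rw [gA t h1] at hrt
      have hgt := gt_of_lt_qTime h ht.1 (lt_of_le_of_lt h1 hylt)
      rw [hrt, hQm] at hgt
      have hmn : m < n := by exact_mod_cast hgt
      rw [hQm]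
      have hmn' : m + 1 ≤ n := hmn
      exact_mod_cast hmn'
    · rcases le_or_gt t (qTime α τ) with h2 | h2
      · rw [gB t (not_le.2 h1) h2] at hrt
        have := hupper t h1.le h2
        linarith
      · rw [gC t (not_le.2 h1) (not_le.2 h2)] at hrt
        have hmem' : ((n : ℝ) - 2) ∈ Aset α τ :=
          ⟨⟨t, ht, by linarith⟩, n - 2, by push_cast; ring⟩
        have := hleast.2 hmem'
        linarith
  rw [Qval_eq_sInf_Aset]
  exact IsLeast.csInf_eq ⟨hmem, hlb⟩

end EOpSpec
section FOpSpec

variable {V : Type} [AddCommGroup V] [Module ℝ V]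

lemma fOp_spec {α : Module.Dual ℝ V} {cα : V} (h2 : α cα = 2) {τ : ℝ → V}
    (h : GoodPath α τ) (hP : 1 ≤ Pval α τ) :
    ∃ τ' : ℝ → V, fOp α cα τ = some τ' ∧ GoodPath α τ' ∧
      Pval α τ' = Pval α τ - 1 := by
  obtain ⟨hleast, m, hQm⟩ := goodPath_isLeast h
  obtain ⟨_, _, hpI, hgp⟩ := qTime_pTime_facts h
  have hg1 : Qval α τ + 1 ≤ α (τ 1) := by
    have := Int.le_floor.1 hP
    push_cast at this
    linarith [this]
  have hp0 : (0 : ℝ) ≤ pTime α τ := hpI.1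
  have hp1 : pTime α τ ≤ 1 := hpI.2
  have hplt : pTime α τ < 1 := by
    rcases lt_or_eq_of_le hp1 with h' | h'
    · exact h'
    · rw [h'] at hgp; rw [hgp] at hg1; linarith
  have hcp : ContinuousOn (fun t => α (τ t)) (Set.Icc (pTime α τ) 1) :=
    h.1.mono (Set.Icc_subset_Icc hp0 le_rfl)
  -- the set defining xTime
  set X : Set ℝ := {t | t ∈ Set.Icc (pTime α τ) 1 ∧ α (τ t) = Qval α τ + 1} with hXdef
  have hXne : X.Nonempty := by
    have hmem : Qval α τ + 1 ∈ Set.Icc (α (τ (pTime α τ))) (α (τ 1)) := by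
      rw [hgp]; exact ⟨by linarith, hg1⟩
    obtain ⟨t0, ht0, hgt0⟩ := intermediate_value_Icc hp1 hcp hmem
    exact ⟨t0, ht0, hgt0⟩
  have hXclosed : IsClosed X := by
    have : X = Set.Icc (pTime α τ) 1 ∩ (fun t => α (τ t)) ⁻¹' {Qval α τ + 1} := by
      ext u; simp [hXdef, Set.mem_setOf_eq]
    rw [this]
    exact hcp.preimage_isClosed_of_isClosed isClosed_Icc isClosed_singleton
  have hXcomp : IsCompact X := isCompact_Icc.of_isClosed_subset hXclosed (fun u hu => hu.1)
  have hxX : xTime α τ ∈ X := hXcomp.sInf_mem hXne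
  have hpx : pTime α τ ≤ xTime α τ := hxX.1.1
  have hx1 : xTime α τ ≤ 1 := hxX.1.2
  have hgx : α (τ (xTime α τ)) = Qval α τ + 1 := hxX.2
  have hx0 : (0 : ℝ) ≤ xTime α τ := le_trans hp0 hpx
  have hpxlt : pTime α τ < xTime α τ := by
    rcases lt_or_eq_of_le hpx with h' | h'
    · exact h'
    · rw [← h', hgp] at hgx; linarith
  -- upper bound on the middle segment
  have hupper : ∀ t, pTime α τ ≤ t → t ≤ xTime α τ → α (τ t) ≤ Qval α τ + 1 := by
    intro t hpt htx
    by_contra hgt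
    push_neg at hgt
    have hpt' : pTime α τ < t := by
      rcases lt_or_eq_of_le hpt with h' | h'
      · exact h'
      · rw [← h', hgp] at hgt; linarith
    have hmem : Qval α τ + 1 ∈ Set.Icc (α (τ (pTime α τ))) (α (τ t)) :=
      ⟨by rw [hgp]; linarith, hgt.le⟩
    obtain ⟨t', ht', hgt'⟩ := intermediate_value_Icc hpt
      (hcp.mono (Set.Icc_subset_Icc le_rfl (le_trans htx hx1))) hmem
    have ht'X : t' ∈ X := ⟨⟨ht'.1, le_trans ht'.2 (le_trans htx hx1)⟩, hgt'⟩
    have hle' : xTime α τ ≤ t' := csInf_le hXcomp.bddBelow ht'X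
    have : t = xTime α τ := le_antisymm htx (le_trans hle' ht'.2)
    rw [this, hgx] at hgt; linarith
  -- the new path
  set τ' : ℝ → V := fun s =>
      if s ≤ pTime α τ then τ s
      else if s ≤ xTime α τ then τ s - (α (τ s) - Qval α τ) • cα
      else τ s - τ (xTime α τ) + (τ (xTime α τ) - (α (τ (xTime α τ)) - Qval α τ) • cα)
    with hτ'
  have hfop : fOp α cα τ = some τ' := by rw [fOp, if_pos hP]
  -- values of α on the new path
  have gA : ∀ t : ℝ, t ≤ pTime α τ → α (τ' t) = α (τ t) := by
    intro t ht; rw [hτ']; simp only [if_pos ht]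
  have gB : ∀ t : ℝ, ¬(t ≤ pTime α τ) → t ≤ xTime α τ →
      α (τ' t) = 2 * Qval α τ - α (τ t) := by
    intro t ht htx
    rw [hτ']
    simp only [if_neg ht, if_pos htx, map_sub, map_smul, smul_eq_mul, h2]
    ring
  have gC : ∀ t : ℝ, ¬(t ≤ pTime α τ) → ¬(t ≤ xTime α τ) →
      α (τ' t) = α (τ t) - 2 := by
    intro t ht htx
    rw [hτ']
    simp only [if_neg ht, if_neg htx, map_add, map_sub, map_smul, smul_eq_mul, h2, hgx]
    ring
  -- GoodPath τ'
  have hgood' : GoodPath α τ' := by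
    constructor
    · have hclamp : Continuous (fun t : ℝ => max (pTime α τ) (min t (xTime α τ))) :=
        continuous_const.max (continuous_id.min continuous_const)
      have hmaps : Set.MapsTo (fun t : ℝ => max (pTime α τ) (min t (xTime α τ)))
          (Set.Icc 0 1) (Set.Icc 0 1) := by
        intro t ht
        constructor
        · exact le_trans hp0 (le_max_left _ _)
        · exact max_le hp1 (le_trans (min_le_right _ _) hx1)
      have hcont2 : ContinuousOn
          (fun t : ℝ => α (τ (max (pTime α τ) (min t (xTime α τ))))) (Set.Icc 0 1) :=
        h.1.comp hclamp.continuousOn hmaps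
      have hmodel : ContinuousOn (fun t : ℝ => α (τ t) -
          2 * (α (τ (max (pTime α τ) (min t (xTime α τ)))) - Qval α τ))
          (Set.Icc 0 1) :=
        h.1.sub (continuousOn_const.mul (hcont2.sub continuousOn_const))
      refine hmodel.congr ?_
      intro t ht
      show α (τ' t) = α (τ t) -
          2 * (α (τ (max (pTime α τ) (min t (xTime α τ)))) - Qval α τ)
      rcases le_or_gt t (pTime α τ) with h1 | h1
      · have hcl : max (pTime α τ) (min t (xTime α τ)) = pTime α τ := by
          rw [min_eq_left (le_trans h1 hpx), max_eq_left h1]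
        rw [gA t h1, hcl, hgp]; ring
      · rcases le_or_gt t (xTime α τ) with h2 | h2
        · have hcl : max (pTime α τ) (min t (xTime α τ)) = t := by
            rw [min_eq_left h2, max_eq_right h1.le]
          rw [gB t (not_le.2 h1) h2, hcl]; ring
        · have hcl : max (pTime α τ) (min t (xTime α τ)) = xTime α τ := by
            rw [min_eq_right h2.le, max_eq_right hpx]
          rw [gC t (not_le.2 h1) (not_le.2 h2), hcl, hgx]; ring
    · rw [gA 0 hp0, h.2]
  refine ⟨τ', hfop, hgood', ?_⟩
  -- the new Qval is Q - 1
  have hmem : Qval α τ - 1 ∈ Aset α τ' := by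
    refine ⟨⟨xTime α τ, ⟨hx0, hx1⟩, ?_⟩, m - 1, ?_⟩
    · rw [gB _ (not_le.2 hpxlt) le_rfl, hgx]; ring
    · rw [hQm]; push_cast; ring
  have hlb : ∀ r ∈ Aset α τ', Qval α τ - 1 ≤ r := by
    rintro r ⟨⟨t, ht, hrt⟩, n, rfl⟩
    rcases le_or_gt t (pTime α τ) with h1 | h1
    · rw [gA t h1] at hrt
      have : Qval α τ ≤ (n : ℝ) := hleast.2 ⟨⟨t, ht, hrt⟩, n, rfl⟩
      linarith
    · rcases le_or_gt t (xTime α τ) with h2 | h2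
      · rw [gB t (not_le.2 h1) h2] at hrt
        have := hupper t h1.le h2
        linarith
      · rw [gC t (not_le.2 h1) (not_le.2 h2)] at hrt
        have hgt := gt_of_gt_pTime h (by linarith) ht.2 (lt_trans hpxlt h2)
        rw [show α (τ t) = (n : ℝ) + 2 by linarith, hQm] at hgt
        have hmn : m < n + 2 := by exact_mod_cast hgt
        have hmn' : m - 1 ≤ n := by omega
        rw [hQm]
        exact_mod_cast hmn'
  have hQ' : Qval α τ' = Qval α τ - 1 := by
    rw [Qval_eq_sInf_Aset]
    exact IsLeast.csInf_eq ⟨hmem, hlb⟩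
  -- the endpoint value drops by 2
  have hend : α (τ' 1) = α (τ 1) - 2 := by
    rcases le_or_gt 1 (xTime α τ) with h2 | h2
    · have hx1' : xTime α τ = 1 := le_antisymm hx1 h2
      rw [gB 1 (not_le.2 hplt) h2, ← hx1', hgx]; ring
    · rw [gC 1 (not_le.2 hplt) (not_le.2 h2)]
  -- conclusion on Pval
  have : α (τ' 1) - Qval α τ' = (α (τ 1) - Qval α τ) - 1 := by
    rw [hend, hQ']; ring
  rw [Pval, this]
  rw [show (α (τ 1) - Qval α τ) - 1 = (α (τ 1) - Qval α τ) + (-1 : ℤ) by push_cast; ring]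
  rw [Int.floor_add_intCast]
  rfl

end FOpSpec
section IterSpec

variable {V : Type} [AddCommGroup V] [Module ℝ V]

lemma eIter_spec {α : Module.Dual ℝ V} {cα : V} (h2 : α cα = 2) :
    ∀ (n : ℕ) (τ : ℝ → V), GoodPath α τ →
      (((n : ℝ) ≤ -Qval α τ → ∃ τ' : ℝ → V, eIter α cα n τ = some τ' ∧ GoodPath α τ' ∧
          Qval α τ' = Qval α τ + n) ∧
        (¬((n : ℝ) ≤ -Qval α τ) → eIter α cα n τ = none)) := by
  intro n
  induction n with
  | zero =>
    intro τ hτ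
    constructor
    · intro _
      exact ⟨τ, rfl, hτ, by norm_num⟩
    · intro hn
      exact absurd (by simpa using qval_nonpos hτ) hn
  | succ n ih =>
    intro τ hτ
    have hstep : eIter α cα (n + 1) τ = (eIter α cα n τ).bind (eOp α cα) := rfl
    constructor
    · intro hle
      have hle' : (n : ℝ) ≤ -Qval α τ := by push_cast at hle ⊢; linarith
      obtain ⟨τn, hiter, hgood, hQn⟩ := (ih τ hτ).1 hle'
      have hQn1 : Qval α τn ≤ -1 := by
        rw [hQn]; push_cast at hle; linarith
      obtain ⟨τ', hop, hgood', hQ'⟩ := eOp_spec h2 hgood hQn1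
      refine ⟨τ', ?_, hgood', ?_⟩
      · rw [hstep, hiter]; exact hop
      · rw [hQ', hQn]; push_cast; ring
    · intro hn
      by_cases hc : (n : ℝ) ≤ -Qval α τ
      · obtain ⟨τn, hiter, hgood, hQn⟩ := (ih τ hτ).1 hc
        have : ¬(Qval α τn ≤ -1) := by
          rw [hQn]; push_neg at hn ⊢; push_cast at hn ⊢; linarith
        rw [hstep, hiter]
        show (eOp α cα τn) = none
        rw [eOp, if_neg this]
      · rw [hstep, (ih τ hτ).2 hc]
        rfl

lemma fIter_spec {α : Module.Dual ℝ V} {cα : V} (h2 : α cα = 2) :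
    ∀ (n : ℕ) (τ : ℝ → V), GoodPath α τ →
      (((n : ℤ) ≤ Pval α τ → ∃ τ' : ℝ → V, fIter α cα n τ = some τ' ∧ GoodPath α τ' ∧
          Pval α τ' = Pval α τ - n) ∧
        (¬((n : ℤ) ≤ Pval α τ) → 1 ≤ n → fIter α cα n τ = none)) := by
  intro n
  induction n with
  | zero =>
    intro τ hτ
    refine ⟨fun _ => ⟨τ, rfl, hτ, by norm_num⟩, fun _ h10 => absurd h10 (by norm_num)⟩
  | succ n ih =>
    intro τ hτ
    have hstep : fIter α cα (n + 1) τ = (fIter α cα n τ).bind (fOp α cα) := rfl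
    constructor
    · intro hle
      have hle' : (n : ℤ) ≤ Pval α τ := by push_cast at hle ⊢; omega
      obtain ⟨τn, hiter, hgood, hPn⟩ := (ih τ hτ).1 hle'
      have hPn1 : 1 ≤ Pval α τn := by
        rw [hPn]; push_cast at hle; omega
      obtain ⟨τ', hop, hgood', hP'⟩ := fOp_spec h2 hgood hPn1
      refine ⟨τ', ?_, hgood', ?_⟩
      · rw [hstep, hiter]; exact hop
      · rw [hP', hPn]; push_cast; ring
    · intro hn _
      by_cases hc : (n : ℤ) ≤ Pval α τ
      · obtain ⟨τn, hiter, hgood, hPn⟩ := (ih τ hτ).1 hc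
        have : ¬(1 ≤ Pval α τn) := by
          rw [hPn]; push_neg at hn ⊢; push_cast at hn ⊢; omega
        rw [hstep, hiter]
        show (fOp α cα τn) = none
        rw [fOp, if_neg this]
      · rcases Nat.eq_zero_or_pos n with h0 | h0
        · subst h0
          have hn' : ¬(1 ≤ Pval α τ) := by
            intro h'; exact hn (by push_cast; omega)
          rw [hstep]
          show (fOp α cα τ) = none
          rw [fOp, if_neg hn']
        · rw [hstep, (ih τ hτ).2 hc h0]
          rfl

lemma continuousOn_glue {f : ℝ → ℝ} {a b c : ℝ} (hab : a ≤ b) (hbc : b ≤ c)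
    (h1 : ContinuousOn f (Set.Icc a b)) (h2 : ContinuousOn f (Set.Icc b c)) :
    ContinuousOn f (Set.Icc a c) := by
  rw [← Set.Icc_union_Icc_eq_Icc hab hbc]
  intro x hx
  have c1 : ContinuousWithinAt f (Set.Icc a b) x := by
    by_cases hm : x ∈ Set.Icc a b
    · exact h1 x hm
    · exact continuousWithinAt_of_notMem_closure (by rwa [isClosed_Icc.closure_eq])
  have c2 : ContinuousWithinAt f (Set.Icc b c) x := by
    by_cases hm : x ∈ Set.Icc b c
    · exact h2 x hm
    · exact continuousWithinAt_of_notMem_closure (by rwa [isClosed_Icc.closure_eq])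
  exact c1.union c2

lemma piecewiseLinear_continuousOn {π : ℝ → V} (hPL : PiecewiseLinear π)
    (α : Module.Dual ℝ V) : ContinuousOn (fun t => α (π t)) (Set.Icc 0 1) := by
  obtain ⟨n, t, ht0, htl, hmono, hseg⟩ := hPL
  have key : ∀ j : ℕ, ∀ hj : j ≤ n,
      ContinuousOn (fun s => α (π s)) (Set.Icc (t 0) (t ⟨j, Nat.lt_succ_of_le hj⟩)) := by
    intro j
    induction j with
    | zero =>
      intro hj
      have : (⟨0, Nat.lt_succ_of_le hj⟩ : Fin (n + 1)) = 0 := rfl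
      rw [this, Set.Icc_self]
      exact continuousOn_singleton _ _
    | succ j ihj =>
      intro hj
      have hjn : j ≤ n := Nat.le_of_succ_le hj
      have hjlt : j < n := hj
      have h0j : t 0 ≤ t ⟨j, Nat.lt_succ_of_le hjn⟩ := hmono.monotone (by simp)
      have hjj1 : t ⟨j, Nat.lt_succ_of_le hjn⟩ ≤ t ⟨j + 1, Nat.lt_succ_of_le hj⟩ :=
        hmono.monotone (by simp)
      refine continuousOn_glue h0j hjj1 (ihj hjn) ?_
      obtain ⟨v, hv⟩ := hseg ⟨j, hjlt⟩
      have hcast : (⟨j, hjlt⟩ : Fin n).castSucc = (⟨j, Nat.lt_succ_of_le hjn⟩ : Fin (n + 1)) :=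
        rfl
      have hsucc : (⟨j, hjlt⟩ : Fin n).succ = (⟨j + 1, Nat.lt_succ_of_le hj⟩ : Fin (n + 1)) :=
        rfl
      rw [hcast, hsucc] at hv
      have hmodel : ContinuousOn (fun s : ℝ => α (π (t ⟨j, Nat.lt_succ_of_le hjn⟩)) +
          (s - t ⟨j, Nat.lt_succ_of_le hjn⟩) * α v)
          (Set.Icc (t ⟨j, Nat.lt_succ_of_le hjn⟩) (t ⟨j + 1, Nat.lt_succ_of_le hj⟩)) := by
        apply ContinuousOn.add continuousOn_const
        exact ContinuousOn.mul ((continuousOn_id.sub continuousOn_const)) continuousOn_const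
      refine hmodel.congr ?_
      intro s hs
      dsimp only
      rw [hv s hs]
      simp [map_add, map_smul, smul_eq_mul]
  have := key n le_rfl
  have hlast : (⟨n, Nat.lt_succ_of_le le_rfl⟩ : Fin (n + 1)) = Fin.last n := rfl
  rw [hlast, ht0, htl] at this
  exact this

end IterSpec

/-- Let `π` be a piecewise linear path with `π(0) = 0` and `α` a simple
root, with `Q` and `P` as in the definition of the root operators. For all `n ≥ 1`,
`(e_α)^n π` is defined iff `n ≤ −Q`, and `(f_α)^n π` is defined iff `n ≤ P`. Moreover, if
`π(1) ∈ P^∨` then `P + Q = α(π(1))`. -/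
theorem eIter_fIter_defined_iff
    {V : Type} [AddCommGroup V] [Module ℝ V] [FiniteDimensional ℝ V]
    (S : RootSystemSetup V) (i : S.I) (π : ℝ → V)
    (hPL : PiecewiseLinear π) (h0 : π 0 = 0) :
    (∀ n : ℕ, 1 ≤ n →
      ((eIter (S.simpleRoot i) (S.coroot (S.simpleRoot i)) n π).isSome ↔
        (n : ℝ) ≤ -Qval (S.simpleRoot i) π)) ∧
    (∀ n : ℕ, 1 ≤ n →
      ((fIter (S.simpleRoot i) (S.coroot (S.simpleRoot i)) n π).isSome ↔
        (n : ℤ) ≤ Pval (S.simpleRoot i) π)) ∧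
    (π 1 ∈ S.Pvee →
      (Pval (S.simpleRoot i) π : ℝ) + Qval (S.simpleRoot i) π = S.simpleRoot i (π 1)) := by
  have h2 : S.simpleRoot i (S.coroot (S.simpleRoot i)) = 2 :=
    S.pairing_self _ (S.simple_mem i)
  have hgood : GoodPath (S.simpleRoot i) π :=
    ⟨piecewiseLinear_continuousOn hPL _, by rw [h0, map_zero]⟩
  obtain ⟨hleast, m, hQm⟩ := goodPath_isLeast hgood
  refine ⟨?_, ?_, ?_⟩
  · intro n hn
    constructor
    · intro hs
      by_contra hle
      rw [(eIter_spec h2 n π hgood).2 hle] at hs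
      simp at hs
    · intro hle
      obtain ⟨τ', h', _, _⟩ := (eIter_spec h2 n π hgood).1 hle
      rw [h']
      rfl
  · intro n hn
    constructor
    · intro hs
      by_contra hle
      rw [(fIter_spec h2 n π hgood).2 hle hn] at hs
      simp at hs
    · intro hle
      obtain ⟨τ', h', _, _⟩ := (fIter_spec h2 n π hgood).1 hle
      rw [h']
      rfl
  · intro hP1
    obtain ⟨k, hk⟩ := hP1 (S.simpleRoot i) (S.simple_mem i)
    have hPv : Pval (S.simpleRoot i) π = k - m := by
      rw [Pval, hk, hQm,
        show (k : ℝ) - (m : ℝ) = ((k - m : ℤ) : ℝ) by push_cast; ring,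
        Int.floor_intCast]
    rw [hPv, hQm, hk]
    push_cast
    ring
end
end

section
/- Let X be a complete metric space such that every pair of points x, y ∈ X admits a midpoint m (i.e. d(x,m) = d(y,m) = d(x,y)/2) satisfying the (CN) inequality: for every z ∈ X, d(z,m)² ≤ (1/2)·d(z,x)² + (1/2)·d(z,y)² − (1/4)·d(x,y)². Let φ : X → X be a 1-Lipschitz map. If there exists x ∈ X such that the forward orbit {φⁿ(x) : n ≥ 0} is bounded, then φ has a fixed point in X. -/
noncomputable section

namespace FPBAux

variable {X : Type*} [MetricSpace X]

/-- `fpbG φ x z k = sup_n d(z, φ^[n+k] x)^2`. -/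
noncomputable def fpbG (φ : X → X) (x z : X) (k : ℕ) : ℝ :=
  ⨆ n : ℕ, dist z (φ^[n + k] x) ^ 2

/-- `fpbR φ x z = limsup_n d(z, φ^[n] x)^2`, written as `inf_k sup_{n} d(z, φ^[n+k]x)^2`. -/
noncomputable def fpbR (φ : X → X) (x z : X) : ℝ :=
  ⨅ k : ℕ, fpbG φ x z k

variable {φ : X → X} {x : X}

lemma fpb_bdd (hb : ∀ w : X, ∃ B : ℝ, ∀ n : ℕ, dist w (φ^[n] x) ≤ B) (z : X) (k : ℕ) :
    BddAbove (Set.range fun n : ℕ => dist z (φ^[n + k] x) ^ 2) := by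
  obtain ⟨B, hB⟩ := hb z
  refine ⟨B ^ 2, ?_⟩
  rintro _ ⟨n, rfl⟩
  exact pow_le_pow_left₀ dist_nonneg (hB _) 2

lemma le_fpbG (hb : ∀ w : X, ∃ B : ℝ, ∀ n : ℕ, dist w (φ^[n] x) ≤ B) (z : X) (k n : ℕ) :
    dist z (φ^[n + k] x) ^ 2 ≤ fpbG φ x z k :=
  le_ciSup (fpb_bdd hb z k) n

lemma fpbG_nonneg (hb : ∀ w : X, ∃ B : ℝ, ∀ n : ℕ, dist w (φ^[n] x) ≤ B) (z : X) (k : ℕ) :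
    0 ≤ fpbG φ x z k :=
  le_trans (sq_nonneg _) (le_fpbG hb z k 0)

lemma fpbG_antitone (hb : ∀ w : X, ∃ B : ℝ, ∀ n : ℕ, dist w (φ^[n] x) ≤ B) (z : X) :
    Antitone (fpbG φ x z) := by
  refine antitone_nat_of_succ_le fun k => ?_
  refine ciSup_le fun n => ?_
  have := le_fpbG hb z k (n + 1)
  simpa [Nat.add_assoc, Nat.add_comm 1 k] using this

lemma fpbR_le_fpbG (hb : ∀ w : X, ∃ B : ℝ, ∀ n : ℕ, dist w (φ^[n] x) ≤ B) (z : X) (k : ℕ) :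
    fpbR φ x z ≤ fpbG φ x z k :=
  ciInf_le ⟨0, by rintro _ ⟨k, rfl⟩; exact fpbG_nonneg hb z k⟩ k

lemma fpbR_nonneg (hb : ∀ w : X, ∃ B : ℝ, ∀ n : ℕ, dist w (φ^[n] x) ≤ B) (z : X) :
    0 ≤ fpbR φ x z :=
  le_ciInf (fpbG_nonneg hb z)

/-- Quantitative continuity of `fpbR`. -/
lemma fpbR_le_add (hb : ∀ w : X, ∃ B : ℝ, ∀ n : ℕ, dist w (φ^[n] x) ≤ B)
    {z w : X} {B : ℝ} (hB : ∀ n : ℕ, dist w (φ^[n] x) ≤ B) :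
    fpbR φ x z ≤ fpbR φ x w + (2 * B + dist z w) * dist z w := by
  have key : ∀ k, fpbG φ x z k ≤ fpbG φ x w k + (2 * B + dist z w) * dist z w := by
    intro k
    refine ciSup_le fun n => ?_
    have h1 : dist z (φ^[n + k] x) ≤ dist z w + dist w (φ^[n + k] x) := dist_triangle _ _ _
    have h2 : dist w (φ^[n + k] x) ^ 2 ≤ fpbG φ x w k := le_fpbG hb w k n
    have h3 : dist w (φ^[n + k] x) ≤ B := hB _
    have h4 : (0:ℝ) ≤ dist z w := dist_nonneg
    have h5 : (0:ℝ) ≤ dist z (φ^[n + k] x) := dist_nonneg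
    have h6 : (0:ℝ) ≤ dist w (φ^[n + k] x) := dist_nonneg
    nlinarith [sq_nonneg (dist z w)]
  have : fpbR φ x z - (2 * B + dist z w) * dist z w ≤ fpbR φ x w := by
    refine le_ciInf fun k => ?_
    have := fpbR_le_fpbG hb z k
    have := key k
    linarith
  linarith

/-- `fpbR` does not increase under `φ`. -/
lemma fpbR_apply_le (hb : ∀ w : X, ∃ B : ℝ, ∀ n : ℕ, dist w (φ^[n] x) ≤ B)
    (hφ : ∀ a b : X, dist (φ a) (φ b) ≤ dist a b) (z : X) :
    fpbR φ x (φ z) ≤ fpbR φ x z := by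
  refine le_ciInf fun k => ?_
  have key : fpbG φ x (φ z) (k + 1) ≤ fpbG φ x z k := by
    refine ciSup_le fun n => ?_
    have he : φ^[n + (k + 1)] x = φ (φ^[n + k] x) := by
      rw [show n + (k + 1) = (n + k) + 1 by ring, Function.iterate_succ_apply']
    have h1 : dist (φ z) (φ^[n + (k + 1)] x) ≤ dist z (φ^[n + k] x) := by
      rw [he]; exact hφ _ _
    have h2 : dist z (φ^[n + k] x) ^ 2 ≤ fpbG φ x z k := le_fpbG hb z k n
    nlinarith [dist_nonneg (x := φ z) (y := φ^[n + (k + 1)] x), dist_nonneg (x := z) (y := φ^[n + k] x)]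
  exact le_trans (fpbR_le_fpbG hb (φ z) (k + 1)) key

/-- The (CN) inequality passes to `fpbR`. -/
lemma fpbR_CN (hb : ∀ w : X, ∃ B : ℝ, ∀ n : ℕ, dist w (φ^[n] x) ≤ B)
    {y w m : X}
    (hCN : ∀ z : X, dist z m ^ 2 ≤
      (1 / 2) * dist z y ^ 2 + (1 / 2) * dist z w ^ 2 - (1 / 4) * dist y w ^ 2) :
    fpbR φ x m ≤ (1 / 2) * fpbR φ x y + (1 / 2) * fpbR φ x w - (1 / 4) * dist y w ^ 2 := by
  have gkey : ∀ k, fpbG φ x m k ≤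
      (1 / 2) * fpbG φ x y k + (1 / 2) * fpbG φ x w k - (1 / 4) * dist y w ^ 2 := by
    intro k
    refine ciSup_le fun n => ?_
    have h := hCN (φ^[n + k] x)
    rw [dist_comm _ m, dist_comm _ y, dist_comm _ w] at h
    have h2 := le_fpbG hb y k n
    have h3 := le_fpbG hb w k n
    linarith
  refine le_of_forall_pos_le_add fun ε hε => ?_
  obtain ⟨k1, hk1⟩ : ∃ k, fpbG φ x y k < fpbR φ x y + ε :=
    exists_lt_of_ciInf_lt (lt_add_of_pos_right _ hε)
  obtain ⟨k2, hk2⟩ : ∃ k, fpbG φ x w k < fpbR φ x w + ε :=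
    exists_lt_of_ciInf_lt (lt_add_of_pos_right _ hε)
  have h1 : fpbG φ x y (max k1 k2) ≤ fpbG φ x y k1 := fpbG_antitone hb y (le_max_left _ _)
  have h2 : fpbG φ x w (max k1 k2) ≤ fpbG φ x w k2 := fpbG_antitone hb w (le_max_right _ _)
  have h3 := fpbR_le_fpbG hb m (max k1 k2)
  have h4 := gkey (max k1 k2)
  linarith

end FPBAux

open FPBAux

/-- Let `X` be a complete metric space in which every pair of points
`x, y` admits a midpoint `m` (`d(x,m) = d(y,m) = d(x,y)/2`) satisfying the (CN) inequality
of Bruhat–Tits: `d(z,m)² ≤ (1/2)·d(z,x)² + (1/2)·d(z,y)² − (1/4)·d(x,y)²` for all `z`.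
If `φ : X → X` is `1`-Lipschitz and some forward orbit `{φⁿ(x) : n ≥ 0}` is bounded,
then `φ` has a fixed point. -/
theorem fixed_point_of_bounded_orbit
    {X : Type*} [MetricSpace X] [CompleteSpace X]
    (hmid : ∀ x y : X, ∃ m : X, dist x m = dist x y / 2 ∧ dist y m = dist x y / 2 ∧
      ∀ z : X, dist z m ^ 2 ≤
        (1 / 2) * dist z x ^ 2 + (1 / 2) * dist z y ^ 2 - (1 / 4) * dist x y ^ 2)
    (φ : X → X) (hφ : ∀ x y : X, dist (φ x) (φ y) ≤ dist x y)
    (x : X) (hx : Bornology.IsBounded (Set.range fun n : ℕ => φ^[n] x)) :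
    ∃ z : X, φ z = z := by
  classical
  have hne : Nonempty X := ⟨x⟩
  -- boundedness of the orbit from every point
  obtain ⟨C, hC⟩ := Metric.isBounded_iff.mp hx
  have hb : ∀ w : X, ∃ B : ℝ, ∀ n : ℕ, dist w (φ^[n] x) ≤ B := by
    intro w
    refine ⟨dist w x + C, fun n => ?_⟩
    have h1 : dist w (φ^[n] x) ≤ dist w x + dist x (φ^[n] x) := dist_triangle _ _ _
    have h2 : dist x (φ^[n] x) ≤ C := by
      have hx0 : x ∈ Set.range fun n : ℕ => φ^[n] x := ⟨0, rfl⟩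
      exact hC hx0 ⟨n, rfl⟩
    linarith
  -- the infimum of fpbR
  set R : X → ℝ := fpbR φ x with hR
  have hRbdd : BddBelow (Set.range R) := ⟨0, by rintro _ ⟨z, rfl⟩; exact fpbR_nonneg hb z⟩
  set Rinf : ℝ := ⨅ z : X, R z with hRinf
  have hRinf_le : ∀ z, Rinf ≤ R z := fun z => ciInf_le hRbdd z
  -- a minimizing sequence
  have hu : ∀ k : ℕ, ∃ z, R z < Rinf + 1 / (k + 1) := by
    intro k
    refine exists_lt_of_ciInf_lt (lt_add_of_pos_right _ ?_)
    positivity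
  choose u hu using hu
  -- the CN estimate between points of the minimizing sequence
  have hdd : ∀ j k : ℕ, dist (u j) (u k) ^ 2 ≤ 2 * (1 / (j + 1) + 1 / (k + 1)) := by
    intro j k
    obtain ⟨m, -, -, hCN⟩ := hmid (u j) (u k)
    have h1 := fpbR_CN (φ := φ) (x := x) hb hCN
    have h2 := hRinf_le m
    have h3 := hu j
    have h4 := hu k
    linarith
  -- Cauchy
  have hCauchy : CauchySeq u := by
    rw [Metric.cauchySeq_iff']
    intro ε hε
    obtain ⟨N, hN⟩ := exists_nat_gt (4 / ε ^ 2)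
    refine ⟨N, fun n hn => ?_⟩
    have hN1 : (0:ℝ) < (N:ℝ) + 1 := by positivity
    have hNn : (1:ℝ) / (n + 1) ≤ 1 / (N + 1) := by
      apply one_div_le_one_div_of_le hN1
      have : (N:ℝ) ≤ n := Nat.cast_le.mpr hn
      linarith
    have h4N : 4 / ((N:ℝ) + 1) < ε ^ 2 := by
      rw [div_lt_iff₀ hN1]
      have h1 : (4:ℝ) < (N:ℝ) * ε ^ 2 := (div_lt_iff₀ (by positivity)).mp hN
      nlinarith [sq_nonneg ε]
    have hd := hdd n N
    have hlt : dist (u n) (u N) ^ 2 < ε ^ 2 := by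
      have h2 : (4:ℝ) / ((N:ℝ) + 1) = 2 * (1 / ((N:ℝ) + 1) + 1 / ((N:ℝ) + 1)) := by ring
      linarith
    nlinarith [dist_nonneg (x := u n) (y := u N), hε]
  obtain ⟨c, hc⟩ := cauchySeq_tendsto_of_complete hCauchy
  -- R c = Rinf
  have hRc_le : R c ≤ Rinf := by
    refine le_of_forall_pos_le_add fun ε hε => ?_
    obtain ⟨B, hB⟩ := hb c
    have hB0 : 0 ≤ B := le_trans dist_nonneg (hB 0)
    have h2B3 : (0:ℝ) < 2 * B + 3 := by linarith
    set δ : ℝ := min 1 (ε / (2 * (2 * B + 3))) with hδ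
    have hδ0 : 0 < δ := lt_min one_pos (by positivity)
    obtain ⟨N, hNd⟩ := Metric.tendsto_atTop.mp hc δ hδ0
    obtain ⟨M, hM⟩ := exists_nat_gt (2 / ε)
    set k : ℕ := max N M with hk
    have hdk : dist (u k) c < δ := hNd k (le_max_left _ _)
    have hk1 : 1 / ((k:ℝ) + 1) < ε / 2 := by
      have h1 : (2 / ε : ℝ) < (k:ℝ) + 1 := by
        have : (M:ℝ) ≤ (k:ℝ) := Nat.cast_le.mpr (le_max_right N M)
        linarith
      have h2 : (2:ℝ) < ((k:ℝ) + 1) * ε := (div_lt_iff₀ hε).mp h1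
      rw [div_lt_div_iff₀ (by positivity) (by norm_num)]
      linarith
    have hB' : ∀ n : ℕ, dist (u k) (φ^[n] x) ≤ dist (u k) c + B := fun n =>
      le_trans (dist_triangle _ c _) (by linarith [hB n])
    have hL2 := fpbR_le_add (φ := φ) (x := x) hb (z := c) (w := u k) hB'
    rw [dist_comm (u k) c] at hB' hdk hL2
    set d : ℝ := dist c (u k) with hdDef
    have hd0 : (0:ℝ) ≤ d := dist_nonneg
    have hd1 : δ ≤ 1 := min_le_left _ _
    have hd2 : δ ≤ ε / (2 * (2 * B + 3)) := min_le_right _ _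
    have hdle1 : d ≤ 1 := le_of_lt (lt_of_lt_of_le hdk hd1)
    have e1 : (2 * (d + B) + d) * d ≤ (2 * B + 3) * d := by nlinarith
    have e2 : (2 * B + 3) * d ≤ (2 * B + 3) * δ := by nlinarith
    have e3 : (2 * B + 3) * δ ≤ ε / 2 := by
      calc (2 * B + 3) * δ ≤ (2 * B + 3) * (ε / (2 * (2 * B + 3))) :=
            mul_le_mul_of_nonneg_left hd2 h2B3.le
        _ = ε / 2 := by field_simp
    have huk := hu k
    linarith
  have hRc : R c = Rinf := le_antisymm hRc_le (hRinf_le c)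
  -- conclude: the midpoint of c and φ c forces dist c (φ c) = 0
  obtain ⟨m, -, -, hCN⟩ := hmid c (φ c)
  have h1 := fpbR_CN (φ := φ) (x := x) hb hCN
  have h2 := fpbR_apply_le (x := x) hb hφ c
  have h3 := hRinf_le m
  have h4 := hRinf_le (φ c)
  have hsq : dist c (φ c) ^ 2 ≤ 0 := by
    simp only [← hR] at h1 h2
    linarith [hRc ▸ h2, h1, h3]
  have h0 : dist c (φ c) = 0 := by
    nlinarith [dist_nonneg (x := c) (y := φ c)]
  exact ⟨c, (dist_eq_zero.mp h0).symm⟩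
end
end
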